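/- arXiv:2506.13732 — 2 statements merged into one kernel-verified Lean document; each statement's English description precedes it below -/
import Mathlib

section
/- The pushout indexing construction satisfies the pushout universal property at the level of indexing functions: given φ : [a] → 2^[b] induced by an injection [a] ↪ [b] (cofibration-type) and any ψ : [a] → 2^[c], let [d] = [c] ⊔ ([b] \ im φ), with β : [b] → 2^[d] defined by β(j) = {j} if j ∉ im φ and β(φ(i)) = ψ(i), and α : [c] → 2^[d] the singleton inclusion. Then β ∘ φ = α ∘ ψ (using composition (ψφ)(i) = ⋃_{j∈φ(i)} ψ(j)), and for any e and maps δ : [b] → 2^[e], γ : [c] → 2^[e] with δ ∘ φ = γ ∘ ψ, there exists a unique ω : [d] → 2^[e] with ω ∘ β = δ and ω ∘ α = γ. -/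
/-- Composition of set-valued functions: `(ψφ)(x) = ⋃_{y ∈ φ(x)} ψ(y)`. -/
def scomp {α β γ : Type*} [DecidableEq γ] (ψ : β → Finset γ) (φ : α → Finset β) :
    α → Finset γ :=
  fun x => (φ x).biUnion ψ

section
variable {a b c : ℕ} (u : Fin a → Fin b) (ψ : Fin a → Finset (Fin c))

/-- The indexing set `[d] = [c] ⊔ ([b] \ im φ)` of the pushout. -/
def PushIdx : Type := Fin c ⊕ {j : Fin b // ¬ ∃ i, u i = j}

instance : DecidableEq (PushIdx (c := c) u) := by
  unfold PushIdx; infer_instance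

/-- The canonical map `β : [b] → 2^[d]`, sending `j ∉ im φ` to `{j}` and `φ(i)` to `ψ(i)`. -/
noncomputable def pushβ : Fin b → Finset (PushIdx (c := c) u) := fun j =>
  if h : ∃ i, u i = j then (ψ h.choose).image Sum.inl else {Sum.inr ⟨j, h⟩}

/-- The canonical map `α : [c] → 2^[d]`, the singleton inclusion. -/
def pushα : Fin c → Finset (PushIdx (c := c) u) := fun i => {Sum.inl i}

end

/-- the pushout indexing construction satisfies the pushout universal
property at the level of indexing functions: for `φ` cofibration-type (induced by an
injection `u`), the square `β ∘ φ = α ∘ ψ` commutes, and for any `δ, γ` with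
`δ ∘ φ = γ ∘ ψ` there is a unique `ω` with `ω ∘ β = δ` and `ω ∘ α = γ`. -/
theorem pushout_universal_property {a b c : ℕ} (u : Fin a → Fin b)
    (hu : Function.Injective u) (ψ : Fin a → Finset (Fin c)) :
    scomp (pushβ u ψ) (fun i => {u i}) = scomp (pushα u) ψ ∧
    ∀ (e : ℕ) (δ : Fin b → Finset (Fin e)) (γ : Fin c → Finset (Fin e)),
      scomp δ (fun i => {u i}) = scomp γ ψ →
      ∃! ω : PushIdx (c := c) u → Finset (Fin e),
        scomp ω (pushβ u ψ) = δ ∧ scomp ω (pushα u) = γ := by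
  have hβ : ∀ i : Fin a, pushβ u ψ (u i) = (ψ i).image Sum.inl := by
    intro i
    have h : ∃ i', u i' = u i := ⟨i, rfl⟩
    have hc : h.choose = i := hu h.choose_spec
    simp [pushβ, h, hc]
    rfl
  constructor
  · funext i
    simp only [scomp, Finset.singleton_biUnion, hβ, pushα]
    ext x
    refine Iff.trans ?_ Finset.mem_biUnion.symm
    simp [pushα, eq_comm]
    exact exists_congr fun a => and_congr_right fun _ => Finset.mem_singleton.symm
  · intro e δ γ hsq
    refine ⟨fun d => Sum.elim γ (fun j => δ j.1) d, ⟨?_, ?_⟩, ?_⟩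
    · funext j
      by_cases h : ∃ i, u i = j
      · obtain ⟨i, rfl⟩ := h
        have := congrFun hsq i
        simp only [scomp, Finset.singleton_biUnion] at this
        simp only [scomp, hβ i]
        rw [this]
        ext x
        refine Iff.trans Finset.mem_biUnion ?_
        constructor
        · rintro ⟨d, hd, hx⟩
          obtain ⟨a, ha, rfl⟩ := Finset.mem_image.1 hd
          exact Finset.mem_biUnion.2 ⟨a, ha, hx⟩
        · intro hx'
          obtain ⟨a, ha, hx⟩ := Finset.mem_biUnion.1 hx'
          exact ⟨Sum.inl a, Finset.mem_image_of_mem _ ha, hx⟩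
      · simp [scomp, pushβ, h]
        exact Finset.singleton_biUnion
    · funext i
      simp [scomp, pushα]
      exact Finset.singleton_biUnion
    · rintro ω ⟨h1, h2⟩
      funext d
      rcases d with i | ⟨j, hj⟩
      · have := congrFun h2 i
        simp [scomp, pushα] at this
        exact Finset.singleton_biUnion.symm.trans this
      · have := congrFun h1 j
        simp [scomp, pushβ, hj] at this
        exact Finset.singleton_biUnion.symm.trans this
end

section
/- In Γ(C) for a permutative category C, the concatenation A ∨ B = (A_1,…,A_a,B_1,…,B_b) is a coproduct of A and B: the canonical inclusions ([a] ↪ [a+b] and [b] ↪ [a+b] as singleton maps, with identity components) exhibit A ∨ B as a coproduct, i.e., for any object E and morphisms (δ,ℓ) : A → E, (γ,p) : B → E there is a unique morphism (ω,q) : A ∨ B → E commuting with the inclusions. -/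
open CategoryTheory

universe v u

/-- A permutative (strict symmetric monoidal) category: a category whose objects form
a monoid (the strictly associative and unital tensor product on objects), together
with a tensor product on morphisms and a symmetry (braiding). -/
structure Permutative where
  Obj : Type u
  [cat : Category.{v} Obj]
  [mon : Monoid Obj]
  tHom : ∀ {X Y Z W : Obj}, (X ⟶ Y) → (Z ⟶ W) → (X * Z ⟶ Y * W)
  tHom_id : ∀ X Z : Obj, tHom (𝟙 X) (𝟙 Z) = 𝟙 (X * Z)
  tHom_comp : ∀ {X₁ X₂ X₃ Y₁ Y₂ Y₃ : Obj} (f : X₁ ⟶ X₂) (f' : X₂ ⟶ X₃)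
    (g : Y₁ ⟶ Y₂) (g' : Y₂ ⟶ Y₃),
    tHom (f ≫ f') (g ≫ g') = tHom f g ≫ tHom f' g'
  braid : ∀ X Y : Obj, X * Y ≅ Y * X
  braid_braid : ∀ X Y : Obj, (braid X Y).hom ≫ (braid Y X).hom = 𝟙 (X * Y)

attribute [instance] Permutative.cat Permutative.mon

variable {P : Permutative}

/-- A morphism `(φ, f) : A → B` in `Γ(C)`: a set-valued function
`φ : [a] → 2^[b]` and, for each `i` with `φ(i) ≠ ∅`, a morphism
`f_i : A_i ⟶ B_{j_1} ⊗ ⋯ ⊗ B_{j_p}` where `φ(i) = {j_1 < … < j_p}`. -/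
structure GHom (P : Permutative) (A B : List P.Obj) where
  φ : Fin A.length → Finset (Fin B.length)
  f : ∀ i, (φ i).Nonempty → (A.get i ⟶ (((φ i).sort (· ≤ ·)).map B.get).prod)

/-- The identity morphism of `Γ(C)`. -/
def idG (A : List P.Obj) : GHom P A A where
  φ := fun i => {i}
  f := fun i _ => eqToHom (by simp)

/-- Composition in `Γ(C)` of a morphism whose underlying set-function is
singleton-valued (given by `σ`) with an arbitrary morphism. -/
def compSingle {A B C : List P.Obj} (σ : Fin A.length → Fin B.length)
    (u : GHom P A B) (hu : ∀ i, u.φ i = {σ i}) (v : GHom P B C) : GHom P A C where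
  φ := fun i => v.φ (σ i)
  f := fun i h =>
    u.f i (by rw [hu i]; exact ⟨σ i, Finset.mem_singleton_self _⟩) ≫
      eqToHom (by rw [hu i]; simp) ≫ v.f (σ i) h

/-- The index of `A` in the concatenation `A ++ B`. -/
def inlIdx (A B : List P.Obj) (i : Fin A.length) : Fin (A ++ B).length :=
  ⟨i.1, by rw [List.length_append]; omega⟩

/-- The index of `B` in the concatenation `A ++ B`. -/
def inrIdx (A B : List P.Obj) (j : Fin B.length) : Fin (A ++ B).length :=
  ⟨A.length + j.1, by rw [List.length_append]; omega⟩

/-- The canonical inclusion `A → A ∨ B` in `Γ(C)`. -/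
def inlG (A B : List P.Obj) : GHom P A (A ++ B) where
  φ := fun i => {inlIdx A B i}
  f := fun i _ => eqToHom (by simp [inlIdx, List.getElem_append_left])

/-- The canonical inclusion `B → A ∨ B` in `Γ(C)`. -/
def inrG (A B : List P.Obj) : GHom P B (A ++ B) where
  φ := fun j => {inrIdx A B j}
  f := fun j _ => eqToHom (by simp [inrIdx, List.getElem_append_right])

theorem GHom.ext' {A B : List P.Obj} {w1 w2 : GHom P A B}
    (hφ : w1.φ = w2.φ)
    (hf : ∀ i h, w1.f i h = w2.f i (hφ ▸ h) ≫ eqToHom (by rw [hφ])) :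
    w1 = w2 := by
  cases w1; cases w2
  cases hφ
  simp only [GHom.mk.injEq, heq_eq_eq, true_and]
  funext i h
  simpa using hf i h

theorem GHom.f_congr {A B : List P.Obj} (w : GHom P A B) {i j : Fin A.length}
    (hij : i = j) (hi : (w.φ i).Nonempty) :
    w.f i hi = eqToHom (by rw [hij]) ≫ w.f j (hij ▸ hi) ≫ eqToHom (by rw [hij]) := by
  cases hij; simp

theorem lenAB {A B : List P.Obj} (k : Fin (A ++ B).length) (h : ¬ (k : ℕ) < A.length) :
    (k : ℕ) - A.length < B.length := by
  have h2 := k.2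
  have h3 : (A ++ B).length = A.length + B.length := List.length_append
  omega

/-- The coproduct map. -/
def coprodW (A B E : List P.Obj) (u : GHom P A E) (v : GHom P B E) :
    GHom P (A ++ B) E where
  φ := fun k => if h : (k : ℕ) < A.length then u.φ ⟨k.1, h⟩
    else v.φ ⟨k.1 - A.length, lenAB k h⟩
  f := fun k hne =>
    if h : (k : ℕ) < A.length then
      eqToHom (by simp [List.getElem_append_left, h]) ≫
        u.f ⟨k.1, h⟩ (by simpa [h] using hne) ≫ eqToHom (by simp [h])
    else
      eqToHom (by
        have hA : A.length ≤ (k : ℕ) := by omega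
        exact List.getElem_append_right hA) ≫
        v.f ⟨k.1 - A.length, lenAB k h⟩ (by simpa [h] using hne) ≫
          eqToHom (by simp [h])

/-- in `Γ(C)` the concatenation `A ∨ B` together with the canonical
inclusions is a coproduct of `A` and `B`: for any object `E` and morphisms
`A → E`, `B → E` there is a unique morphism `A ∨ B → E` commuting with the
inclusions. -/
theorem concatenation_is_coproduct (P : Permutative) (A B : List P.Obj)
    (E : List P.Obj) (u : GHom P A E) (v : GHom P B E) :
    ∃! w : GHom P (A ++ B) E,
      compSingle (inlIdx A B) (inlG A B) (fun _ => rfl) w = u ∧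
      compSingle (inrIdx A B) (inrG A B) (fun _ => rfl) w = v := by
  refine ⟨coprodW A B E u v, ⟨?_, ?_⟩, ?_⟩
  · refine GHom.ext' (by funext i; simp [compSingle, coprodW, inlIdx]) ?_
    intro i h
    simp [compSingle, coprodW, inlIdx, inlG]
    erw [eqToHom_trans_assoc, eqToHom_trans_assoc, eqToHom_refl, Category.id_comp]
  · refine GHom.ext' (by
      funext j
      have h : ¬ (A.length + j.1 < A.length) := by omega
      simp [compSingle, coprodW, inrIdx, h]) ?_
    intro j h
    have h' : ¬ (A.length + j.1 < A.length) := by omega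
    simp only [compSingle, coprodW, inrIdx, inrG, h', dif_neg, not_false_iff]
    rw [v.f_congr (show (⟨A.length + (j : ℕ) - A.length, lenAB (inrIdx A B j) h'⟩ :
        Fin B.length) = j by ext; simp)]
    simp
    erw [eqToHom_trans_assoc, eqToHom_trans_assoc, eqToHom_refl, Category.id_comp]
  · rintro w' ⟨h1, h2⟩
    subst h1; subst h2
    refine GHom.ext' ?_ ?_
    · funext k
      by_cases h : (k : ℕ) < A.length
      · have hk : inlIdx A B ⟨k.1, h⟩ = k := by simp [inlIdx]
        simp [coprodW, compSingle, h, hk]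
      · have hk : inrIdx A B ⟨k.1 - A.length, lenAB k h⟩ = k := by
          simp only [inrIdx]; ext; simp; omega
        simp [coprodW, compSingle, h, hk]
    · intro k hk
      by_cases h : (k : ℕ) < A.length
      · have hk1 : k = inlIdx A B ⟨k.1, h⟩ := by simp [inlIdx]
        rw [w'.f_congr hk1 hk]
        simp [coprodW, compSingle, h, inlG]
        erw [eqToHom_trans]
      · have hk1 : k = inrIdx A B ⟨k.1 - A.length, lenAB k h⟩ := by
          simp only [inrIdx]; ext; simp; omega
        rw [w'.f_congr hk1 hk]
        simp [coprodW, compSingle, h, inrG]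
        erw [eqToHom_trans]
end
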